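/- The two-dimensional Banach algebra A = ℂ ⊕ ℂ (ℓ¹-norm) equipped with the zero product (ab = 0 for all a,b ∈ A) is not approximately cyclic amenable. -/

import Mathlib

open Filter Topology

noncomputable section

universe u v

variable {A : Type u} [NonUnitalNormedRing A] [NormedSpace ℂ A]
  [IsScalarTower ℂ A A] [SMulCommClass ℂ A A]

/-- The left module action of `A` on its dual `A*`: `(a · f) b = f (b * a)`. -/
def lAct (a : A) (f : A →L[ℂ] ℂ) : A →L[ℂ] ℂ :=
  f.comp ((ContinuousLinearMap.mul ℂ A).flip a)

/-- The right module action of `A` on its dual `A*`: `(f · a) b = f (a * b)`. -/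
def rAct (f : A →L[ℂ] ℂ) (a : A) : A →L[ℂ] ℂ :=
  f.comp (ContinuousLinearMap.mul ℂ A a)

/-- A bounded linear `D : A → A*` is a derivation if `D (a * b) = D a · b + a · D b`. -/
def IsDerivation (D : A →L[ℂ] (A →L[ℂ] ℂ)) : Prop :=
  ∀ a b : A, D (a * b) = rAct (D a) b + lAct a (D b)

/-- A derivation `D : A → A*` is cyclic if `⟨D a, b⟩ + ⟨D b, a⟩ = 0` for all `a, b`. -/
def IsCyclicDeriv (D : A →L[ℂ] (A →L[ℂ] ℂ)) : Prop :=
  ∀ a b : A, D a b + D b a = 0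

/-- `D : A → A*` is approximately inner if there is a net `(f i)` in `A*` with
`D a = lim_i (a · f i - f i · a)` in norm, for every `a ∈ A`. -/
def IsApproxInner {A : Type u} [NonUnitalNormedRing A] [NormedSpace ℂ A]
    [IsScalarTower ℂ A A] [SMulCommClass ℂ A A] (D : A →L[ℂ] (A →L[ℂ] ℂ)) : Prop :=
  ∃ (ι : Type u) (l : Filter ι) (f : ι → (A →L[ℂ] ℂ)), l.NeBot ∧
    ∀ a : A, Tendsto (fun i => lAct a (f i) - rAct (f i) a) l (𝓝 (D a))

/-- `D : A → A*` is inner if `D a = a · f - f · a` for some fixed `f ∈ A*`. -/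
def IsInner (D : A →L[ℂ] (A →L[ℂ] ℂ)) : Prop :=
  ∃ f : A →L[ℂ] ℂ, ∀ a : A, D a = lAct a f - rAct f a

/-- A Banach algebra is approximately cyclic amenable if every cyclic bounded
derivation `D : A → A*` is approximately inner. -/
def ApproxCyclicAmenable (A : Type u) [NonUnitalNormedRing A] [NormedSpace ℂ A]
    [IsScalarTower ℂ A A] [SMulCommClass ℂ A A] : Prop :=
  ∀ D : A →L[ℂ] (A →L[ℂ] ℂ), IsDerivation D → IsCyclicDeriv D → IsApproxInner D

/-- A Banach algebra is cyclic amenable if every cyclic bounded derivation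
`D : A → A*` is inner. -/
def CyclicAmenable (A : Type u) [NonUnitalNormedRing A] [NormedSpace ℂ A]
    [IsScalarTower ℂ A A] [SMulCommClass ℂ A A] : Prop :=
  ∀ D : A →L[ℂ] (A →L[ℂ] ℂ), IsDerivation D → IsCyclicDeriv D → IsInner D

/-- A normed space `V` regarded as a Banach algebra with the zero product. -/
def ZeroMulAlg (V : Type u) : Type u := V

namespace ZeroMulAlg

variable (V : Type u) [NormedAddCommGroup V] [NormedSpace ℂ V]

instance : NormedAddCommGroup (ZeroMulAlg V) := inferInstanceAs (NormedAddCommGroup V)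
instance : NormedSpace ℂ (ZeroMulAlg V) := inferInstanceAs (NormedSpace ℂ V)

/-- The zero product. -/
instance : Mul (ZeroMulAlg V) := ⟨fun _ _ => 0⟩

@[simp] lemma mul_def (x y : ZeroMulAlg V) : x * y = 0 := rfl

instance : NonUnitalRing (ZeroMulAlg V) where
  __ := (inferInstance : AddCommGroup (ZeroMulAlg V))
  mul := (· * ·)
  left_distrib x y z := by simp
  right_distrib x y z := by simp
  zero_mul x := rfl
  mul_zero x := rfl
  mul_assoc x y z := by simp

instance : NonUnitalNormedRing (ZeroMulAlg V) where
  __ := (inferInstance : NonUnitalRing (ZeroMulAlg V))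
  __ := (inferInstance : NormedAddCommGroup (ZeroMulAlg V))
  norm_mul_le x y := by
    rw [mul_def]
    have : ‖(0 : ZeroMulAlg V)‖ = 0 := norm_zero
    exact this.le.trans (mul_nonneg (norm_nonneg x) (norm_nonneg y))

instance : IsScalarTower ℂ (ZeroMulAlg V) (ZeroMulAlg V) :=
  ⟨fun c x y => by show (c • x) * y = c • (x * y); simp⟩

instance : SMulCommClass ℂ (ZeroMulAlg V) (ZeroMulAlg V) :=
  ⟨fun c x y => by show c • (x * y) = x * (c • y); simp⟩

end ZeroMulAlg

section Aux

abbrev A2 : Type := ZeroMulAlg (WithLp 1 (ℂ × ℂ))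

instance : FiniteDimensional ℂ A2 :=
  inferInstanceAs (FiniteDimensional ℂ (WithLp 1 (ℂ × ℂ)))

/-- first coordinate functional -/
def phi1 : A2 →L[ℂ] ℂ :=
  LinearMap.toContinuousLinearMap
    ((LinearMap.fst ℂ ℂ ℂ).comp
      ((WithLp.linearEquiv 1 ℂ (ℂ × ℂ)).toLinearMap : A2 →ₗ[ℂ] (ℂ × ℂ)))

/-- second coordinate functional -/
def phi2 : A2 →L[ℂ] ℂ :=
  LinearMap.toContinuousLinearMap
    ((LinearMap.snd ℂ ℂ ℂ).comp
      ((WithLp.linearEquiv 1 ℂ (ℂ × ℂ)).toLinearMap : A2 →ₗ[ℂ] (ℂ × ℂ)))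

/-- the symplectic-type derivation -/
def D2 : A2 →L[ℂ] (A2 →L[ℂ] ℂ) :=
  phi1.smulRight phi2 - phi2.smulRight phi1

lemma D2_apply (a b : A2) : D2 a b = phi1 a * phi2 b - phi2 a * phi1 b := by
  simp [D2, ContinuousLinearMap.smulRight_apply, smul_eq_mul]

lemma lAct_zero_alg (a : A2) (f : A2 →L[ℂ] ℂ) : lAct a f = 0 := by
  ext b
  simp [lAct, ContinuousLinearMap.mul_apply']

lemma rAct_zero_alg (a : A2) (f : A2 →L[ℂ] ℂ) : rAct f a = 0 := by
  ext b
  simp [rAct, ContinuousLinearMap.mul_apply']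

end Aux

/-- The two-dimensional Banach algebra `ℂ ⊕ ℂ` (with the `ℓ¹`-norm) with
the zero product is not approximately cyclic amenable. -/
theorem zeroMulAlg_complex_sq_not_approxCyclicAmenable :
    ¬ ApproxCyclicAmenable (ZeroMulAlg (WithLp 1 (ℂ × ℂ))) := by
  intro h
  have hder : IsDerivation D2 := by
    intro a b
    rw [lAct_zero_alg, rAct_zero_alg]
    show D2 (0 : A2) = 0 + 0
    simp
  have hcyc : IsCyclicDeriv D2 := by
    intro a b
    rw [D2_apply, D2_apply]
    ring
  obtain ⟨ι, l, f, hne, hf⟩ := h D2 hder hcyc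
  -- the net of inner maps is identically zero, so D2 a = 0 for all a
  have hD0 : ∀ a : A2, D2 a = 0 := by
    intro a
    have h0 : Tendsto (fun i => lAct a (f i) - rAct (f i) a) l (𝓝 0) := by
      have : (fun i => lAct a (f i) - rAct (f i) a) = fun _ => (0 : A2 →L[ℂ] ℂ) := by
        funext i; rw [lAct_zero_alg, rAct_zero_alg, sub_zero]
      rw [this]
      exact tendsto_const_nhds
    exact tendsto_nhds_unique (hf a) h0
  -- but D2 is nonzero at a = (1,0), b = (0,1)
  set a : A2 := (WithLp.equiv 1 (ℂ × ℂ)).symm (1, 0)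
  set b : A2 := (WithLp.equiv 1 (ℂ × ℂ)).symm (0, 1)
  have : D2 a b = 1 := by
    rw [D2_apply]
    have h1 : phi1 a = 1 := rfl
    have h2 : phi2 b = 1 := rfl
    have h3 : phi2 a = 0 := rfl
    rw [h1, h2, h3]
    ring
  rw [hD0 a] at this
  simp at this
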